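/- If b is a bounded holomorphic function on the unit disc satisfying sup_{z∈D}(1-|z|²)·log(2/(1-|z|²))·|b'(z)| < ∞, then b is a multiplier of the Bloch space: for every f ∈ B(D), the product bf belongs to B(D) with ‖bf‖_B ≤ C(‖b‖_∞ + ‖b‖_{B_L})‖f‖_B for a universal constant C. -/

import Mathlib

open intervalIntegral

lemma bloch_growth (f : ℂ → ℂ) (B : ℝ)
    (hf : DifferentiableOn ℂ f {z : ℂ | ‖z‖ < 1})
    (hB : ∀ z : ℂ, ‖z‖ < 1 →
      ‖(f 0)‖ + (1 - ‖z‖ ^ 2) * ‖(deriv f z)‖ ≤ B)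
    (z : ℂ) (hz : ‖z‖ < 1) :
    ‖(f z)‖ ≤ B * (1 + Real.log (2 / (1 - ‖z‖ ^ 2))) := by
  have hopen : IsOpen {w : ℂ | ‖w‖ < 1} := by
    simpa using isOpen_lt continuous_norm continuous_const
  set r : ℝ := ‖z‖ with hrdef
  have hr0 : 0 ≤ r := norm_nonneg z
  have hr1 : r < 1 := hz
  have hB0 : ‖(f 0)‖ ≤ B := by
    have := hB 0 (by simp)
    have h0 : (0:ℝ) ≤ (1 - ‖(0:ℂ)‖ ^ 2) * ‖(deriv f 0)‖ := by
      simpa using norm_nonneg (deriv f 0)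
    linarith
  have hBnn : 0 ≤ B := le_trans (norm_nonneg _) hB0
  -- derivative of f at points of the disc
  have hfd : ∀ w : ℂ, ‖w‖ < 1 → HasDerivAt f (deriv f w) w := fun w hw =>
    ((hf.differentiableAt (hopen.mem_nhds hw)).hasDerivAt)
  -- the path t ↦ f (t z)
  have hmem : ∀ t : ℝ, t ∈ Set.Icc (0:ℝ) 1 → ‖((t:ℂ) * z)‖ < 1 := by
    intro t ht
    have : ‖((t:ℂ) * z)‖ = |t| * r := by
      simp [norm_mul, Complex.norm_real, hrdef]
    rw [this, abs_of_nonneg ht.1]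
    calc t * r ≤ 1 * r := by nlinarith [ht.2]
      _ < 1 := by linarith
  have hg : ∀ t ∈ Set.Icc (0:ℝ) 1,
      HasDerivAt (fun s : ℝ => f ((s:ℂ) * z)) (deriv f ((t:ℂ) * z) * z) t := by
    intro t ht
    have inner : HasDerivAt (fun w : ℂ => w * z) z (t:ℂ) := by
      simpa using (hasDerivAt_id ((t:ℝ):ℂ)).mul_const z
    have : HasDerivAt (fun w : ℂ => f (w * z)) (deriv f ((t:ℂ) * z) * z) (t:ℂ) :=
      HasDerivAt.comp ((t:ℝ):ℂ) (hfd _ (hmem t ht)) inner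
    exact this.comp_ofReal
  -- continuity of the derivative integrand
  have hderivcont : ContinuousOn (deriv f) {w : ℂ | ‖w‖ < 1} := by
    have : AnalyticOnNhd ℂ f {w : ℂ | ‖w‖ < 1} :=
      hf.analyticOnNhd hopen
    exact (this.deriv).continuousOn.mono (by simp [Set.subset_def])
  have hpathcont : ContinuousOn (fun t : ℝ => deriv f ((t:ℂ) * z) * z) (Set.Icc 0 1) := by
    apply ContinuousOn.mul _ continuousOn_const
    apply hderivcont.comp
    · exact (Complex.continuous_ofReal.mul continuous_const).continuousOn
    · intro t ht; exact hmem t ht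
  have hint : IntervalIntegrable (fun t : ℝ => deriv f ((t:ℂ) * z) * z)
      MeasureTheory.volume 0 1 := by
    apply ContinuousOn.intervalIntegrable
    simpa [Set.uIcc_of_le (zero_le_one)] using hpathcont
  have key : f z - f 0 = ∫ t in (0:ℝ)..1, deriv f ((t:ℂ) * z) * z := by
    have := intervalIntegral.integral_eq_sub_of_hasDerivAt
      (fun t ht => hg t (by rwa [Set.uIcc_of_le zero_le_one] at ht)) hint
    simpa using this.symm
  -- the comparison function
  set ψ : ℝ → ℝ := fun t => B / 2 * (r / (1 + t * r) + r / (1 - t * r)) with hψ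
  set F : ℝ → ℝ := fun t => B / 2 * (Real.log (1 + t * r) - Real.log (1 - t * r)) with hF
  have hden : ∀ t ∈ Set.Icc (0:ℝ) 1, 0 < 1 + t * r ∧ 0 < 1 - t * r := by
    intro t ht
    constructor
    · nlinarith [ht.1, ht.2]
    · nlinarith [ht.1, ht.2]
  have hFder : ∀ t ∈ Set.Icc (0:ℝ) 1, HasDerivAt F (ψ t) t := by
    intro t ht
    obtain ⟨h1, h2⟩ := hden t ht
    have d1 : HasDerivAt (fun t : ℝ => 1 + t * r) r t := by
      simpa using ((hasDerivAt_id t).mul_const r).const_add 1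
    have d2 : HasDerivAt (fun t : ℝ => 1 - t * r) (-r) t := by
      simpa using ((hasDerivAt_id t).mul_const r).const_sub 1
    have l1 : HasDerivAt (fun t : ℝ => Real.log (1 + t * r)) (r / (1 + t * r)) t :=
      d1.log (ne_of_gt h1)
    have l2 : HasDerivAt (fun t : ℝ => Real.log (1 - t * r)) (-r / (1 - t * r)) t :=
      d2.log (ne_of_gt h2)
    have := ((l1.sub l2).const_mul (B / 2))
    have hψt : ψ t = B / 2 * (r / (1 + t * r) - -r / (1 - t * r)) := by
      show B / 2 * (r / (1 + t * r) + r / (1 - t * r)) = _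
      ring
    rw [hψt]
    exact this
  have hψcont : ContinuousOn ψ (Set.Icc (0:ℝ) 1) := by
    apply ContinuousOn.mul continuousOn_const
    apply ContinuousOn.add
    · exact continuousOn_const.div (by fun_prop) (fun t ht => ne_of_gt (hden t ht).1)
    · exact continuousOn_const.div (by fun_prop) (fun t ht => ne_of_gt (hden t ht).2)
  have hψint : IntervalIntegrable ψ MeasureTheory.volume 0 1 := by
    apply ContinuousOn.intervalIntegrable
    simpa [Set.uIcc_of_le (zero_le_one)] using hψcont
  have hbound : ∀ t ∈ Set.uIoc (0:ℝ) 1, ‖deriv f ((t:ℂ) * z) * z‖ ≤ ψ t := by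
    intro t ht
    rw [Set.uIoc_of_le zero_le_one] at ht
    have ht' : t ∈ Set.Icc (0:ℝ) 1 := ⟨le_of_lt ht.1, ht.2⟩
    obtain ⟨h1, h2⟩ := hden t ht'
    have habs : ‖((t:ℂ) * z)‖ = t * r := by
      simp [norm_mul, Complex.norm_real, abs_of_nonneg (le_of_lt ht.1), hrdef]
    have hb := hB ((t:ℂ) * z) (hmem t ht')
    rw [habs] at hb
    have hfz : (1 - (t*r)^2) * ‖(deriv f ((t:ℂ) * z))‖ ≤ B := by
      have : (0:ℝ) ≤ ‖(f 0)‖ := norm_nonneg _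
      linarith
    have hpos : 0 < 1 - (t * r) ^ 2 := by nlinarith
    have hd : ‖(deriv f ((t:ℂ) * z))‖ ≤ B / (1 - (t*r)^2) :=
      (le_div_iff₀ hpos).mpr (by linarith [hfz])
    have : ‖deriv f ((t:ℂ) * z) * z‖ = ‖(deriv f ((t:ℂ) * z))‖ * r := by
      simp [norm_mul, hrdef]
    rw [this]
    have hψeq : ψ t = B * r / (1 - (t*r)^2) := by
      simp only [hψ]
      have e : (1 - (t*r)^2) = (1 + t*r) * (1 - t*r) := by ring
      rw [div_add_div _ _ (ne_of_gt h1) (ne_of_gt h2), e]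
      ring
    rw [hψeq]
    calc ‖(deriv f ((t:ℂ) * z))‖ * r ≤ (B / (1 - (t*r)^2)) * r :=
          mul_le_mul_of_nonneg_right hd hr0
      _ = B * r / (1 - (t*r)^2) := by ring
  have hnorm : ‖f z - f 0‖ ≤ |∫ t in (0:ℝ)..1, ψ t| := by
    rw [key]
    apply intervalIntegral.norm_integral_le_abs_of_norm_le _ hψint
    filter_upwards [MeasureTheory.ae_restrict_mem measurableSet_Ioc] with t ht
    exact hbound t ht
  have hψval : (∫ t in (0:ℝ)..1, ψ t) = B / 2 * (Real.log (1 + r) - Real.log (1 - r)) := by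
    have := intervalIntegral.integral_eq_sub_of_hasDerivAt
      (fun t ht => hFder t (by rwa [Set.uIcc_of_le zero_le_one] at ht)) hψint
    rw [this]
    simp [hF]
  -- bound the log expression
  have hlog : B / 2 * (Real.log (1 + r) - Real.log (1 - r))
      ≤ B * Real.log (2 / (1 - r ^ 2)) := by
    have h1r : 0 < 1 - r := by linarith
    have h1r2 : 0 < 1 - r ^ 2 := by nlinarith
    have heq : Real.log (1 + r) - Real.log (1 - r) = Real.log ((1 + r) / (1 - r)) :=
      (Real.log_div (by positivity) (ne_of_gt h1r)).symm
    rw [heq]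
    have hle : (1 + r) / (1 - r) ≤ (2 / (1 - r ^ 2)) ^ 2 := by
      have h4 : (2 / (1 - r ^ 2)) ^ 2 = 4 / ((1 - r^2)^2) := by
        rw [div_pow]; norm_num
      rw [h4, div_le_div_iff₀ h1r (by positivity)]
      nlinarith [pow_nonneg hr0 3, pow_nonneg hr0 4, pow_nonneg hr0 2]
    have hlogle : Real.log ((1 + r) / (1 - r)) ≤ Real.log ((2 / (1 - r ^ 2)) ^ 2) :=
      Real.log_le_log (by positivity) hle
    rw [Real.log_pow] at hlogle
    calc B / 2 * Real.log ((1 + r) / (1 - r))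
        ≤ B / 2 * (2 * Real.log (2 / (1 - r ^ 2))) := by
          apply mul_le_mul_of_nonneg_left _ (by positivity)
          simpa using hlogle
      _ = B * Real.log (2 / (1 - r ^ 2)) := by ring
  have hvalnn : 0 ≤ B / 2 * (Real.log (1 + r) - Real.log (1 - r)) := by
    have hl1 : 0 ≤ Real.log (1 + r) := Real.log_nonneg (by linarith)
    have hl2 : Real.log (1 - r) ≤ 0 := Real.log_nonpos (by linarith) (by linarith)
    have : 0 ≤ Real.log (1 + r) - Real.log (1 - r) := by linarith
    positivity
  have habsval : |∫ t in (0:ℝ)..1, ψ t| = B / 2 * (Real.log (1 + r) - Real.log (1 - r)) := by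
    rw [hψval, abs_of_nonneg hvalnn]
  have htri : ‖(f z)‖ ≤ ‖f z - f 0‖ + ‖(f 0)‖ := by
    simpa [sub_add_cancel] using norm_add_le (f z - f 0) (f 0)
  calc ‖(f z)‖ ≤ ‖f z - f 0‖ + ‖(f 0)‖ := htri
    _ ≤ B + B * Real.log (2 / (1 - r ^ 2)) := by
        have := (hnorm.trans (le_of_eq habsval)).trans hlog
        linarith
    _ = B * (1 + Real.log (2 / (1 - r ^ 2))) := by ring

/-- Sufficiency: if `b ∈ H^∞(D) ∩ B_L(D)` then `b` multiplies the Bloch space,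
with `‖bf‖_B ≤ C(‖b‖_∞ + ‖b‖_{B_L})‖f‖_B`. -/
theorem bloch_multiplier_sufficiency :
    ∃ C : ℝ, 0 < C ∧
      ∀ (b f : ℂ → ℂ) (Mb ML B : ℝ),
        DifferentiableOn ℂ b {z : ℂ | ‖z‖ < 1} →
        DifferentiableOn ℂ f {z : ℂ | ‖z‖ < 1} →
        (∀ z : ℂ, ‖z‖ < 1 → ‖(b z)‖ ≤ Mb) →
        (∀ z : ℂ, ‖z‖ < 1 →
          ‖(b 0)‖ +
            (1 - ‖z‖ ^ 2) * Real.log (2 / (1 - ‖z‖ ^ 2)) *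
              ‖(deriv b z)‖ ≤ ML) →
        (∀ z : ℂ, ‖z‖ < 1 →
          ‖(f 0)‖ + (1 - ‖z‖ ^ 2) * ‖(deriv f z)‖ ≤ B) →
        ∀ z : ℂ, ‖z‖ < 1 →
          ‖((b * f) 0)‖ + (1 - ‖z‖ ^ 2) * ‖(deriv (b * f) z)‖
            ≤ C * (Mb + ML) * B := by
  refine ⟨4, by norm_num, ?_⟩
  intro b f Mb ML B hb hf hMb hML hB z hz
  have hopen : IsOpen {w : ℂ | ‖w‖ < 1} := by
    simpa using isOpen_lt continuous_norm continuous_const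
  set r : ℝ := ‖z‖ with hrdef
  have hr0 : 0 ≤ r := norm_nonneg z
  have hr1 : r < 1 := hz
  have h1r2 : 0 < 1 - r ^ 2 := by nlinarith
  set L : ℝ := Real.log (2 / (1 - r ^ 2)) with hLdef
  have hLlog2 : Real.log 2 ≤ L := by
    apply Real.log_le_log (by norm_num)
    rw [le_div_iff₀ h1r2]
    nlinarith
  have hL : (1:ℝ)/2 ≤ L := by
    have := Real.log_two_gt_d9
    linarith
  have hLpos : 0 < L := by linarith
  -- nonnegativity of the constants
  have hMb0 : 0 ≤ Mb := le_trans (norm_nonneg _) (hMb 0 (by simp))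
  have hML0 : 0 ≤ ML := by
    have := hML 0 (by simp)
    have h0 : (0:ℝ) ≤ (1 - ‖(0:ℂ)‖ ^ 2) * Real.log (2 / (1 - ‖(0:ℂ)‖ ^ 2)) *
        ‖(deriv b 0)‖ := by
      simp only [norm_zero]
      positivity
    linarith [norm_nonneg (b 0)]
  have hB0f : ‖(f 0)‖ ≤ B := by
    have := hB 0 (by simp)
    have h0 : (0:ℝ) ≤ (1 - ‖(0:ℂ)‖ ^ 2) * ‖(deriv f 0)‖ := by
      simp only [norm_zero]; positivity
    linarith
  have hBnn : 0 ≤ B := le_trans (norm_nonneg _) hB0f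
  -- differentiability at z
  have hbz : DifferentiableAt ℂ b z := hb.differentiableAt (hopen.mem_nhds hz)
  have hfz : DifferentiableAt ℂ f z := hf.differentiableAt (hopen.mem_nhds hz)
  have hderiv : deriv (b * f) z = deriv b z * f z + b z * deriv f z := deriv_mul hbz hfz
  -- growth of f
  have hgrowth : ‖(f z)‖ ≤ B * (1 + L) := bloch_growth f B hf hB z hz
  -- bound on b'
  have hb' : (1 - r ^ 2) * L * ‖(deriv b z)‖ ≤ ML := by
    have := hML z hz
    linarith [norm_nonneg (b 0)]
  -- term 1: (1-r²)|b' z||f z| ≤ 3 ML B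
  have hterm1 : (1 - r ^ 2) * (‖(deriv b z)‖ * ‖(f z)‖) ≤ 3 * ML * B := by
    have h1 : (1 - r ^ 2) * (‖(deriv b z)‖ * ‖(f z)‖)
        ≤ (1 - r ^ 2) * ‖(deriv b z)‖ * (B * (1 + L)) := by
      rw [← mul_assoc]
      apply mul_le_mul_of_nonneg_left hgrowth (by positivity)
    have h2 : (1 - r ^ 2) * ‖(deriv b z)‖ * (B * (1 + L))
        ≤ (1 - r ^ 2) * ‖(deriv b z)‖ * (B * (3 * L)) := by
      apply mul_le_mul_of_nonneg_left _ (by positivity)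
      apply mul_le_mul_of_nonneg_left _ hBnn
      linarith
    have h3 : (1 - r ^ 2) * ‖(deriv b z)‖ * (B * (3 * L)) = 3 * B *
        ((1 - r ^ 2) * L * ‖(deriv b z)‖) := by ring
    have h4 : 3 * B * ((1 - r ^ 2) * L * ‖(deriv b z)‖) ≤ 3 * B * ML :=
      mul_le_mul_of_nonneg_left hb' (by positivity)
    calc (1 - r ^ 2) * (‖(deriv b z)‖ * ‖(f z)‖)
        ≤ (1 - r ^ 2) * ‖(deriv b z)‖ * (B * (1 + L)) := h1
      _ ≤ (1 - r ^ 2) * ‖(deriv b z)‖ * (B * (3 * L)) := h2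
      _ = 3 * B * ((1 - r ^ 2) * L * ‖(deriv b z)‖) := h3
      _ ≤ 3 * B * ML := h4
      _ = 3 * ML * B := by ring
  -- term 2
  have hf' : (1 - r ^ 2) * ‖(deriv f z)‖ ≤ B := by
    have := hB z hz
    linarith [norm_nonneg (f 0)]
  have hterm2 : (1 - r ^ 2) * (‖(b z)‖ * ‖(deriv f z)‖) ≤ Mb * B := by
    calc (1 - r ^ 2) * (‖(b z)‖ * ‖(deriv f z)‖)
        = ‖(b z)‖ * ((1 - r ^ 2) * ‖(deriv f z)‖) := by ring
      _ ≤ Mb * B := mul_le_mul (hMb z hz) hf' (by positivity) hMb0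
  -- constant term
  have hconst : ‖((b * f) 0)‖ ≤ Mb * B := by
    have : ‖((b * f) 0)‖ = ‖(b 0)‖ * ‖(f 0)‖ := by
      simp [Pi.mul_apply, norm_mul]
    rw [this]
    exact mul_le_mul (hMb 0 (by simp)) hB0f (norm_nonneg _) hMb0
  -- assemble
  have hdmain : (1 - r ^ 2) * ‖(deriv (b * f) z)‖ ≤ 3 * ML * B + Mb * B := by
    rw [hderiv]
    calc (1 - r ^ 2) * ‖(deriv b z * f z + b z * deriv f z)‖
        ≤ (1 - r ^ 2) * (‖(deriv b z * f z)‖ + ‖(b z * deriv f z)‖) := by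
          apply mul_le_mul_of_nonneg_left (norm_add_le _ _) (by positivity)
      _ = (1 - r ^ 2) * (‖(deriv b z)‖ * ‖(f z)‖)
          + (1 - r ^ 2) * (‖(b z)‖ * ‖(deriv f z)‖) := by
          simp [norm_mul]; ring
      _ ≤ 3 * ML * B + Mb * B := add_le_add hterm1 hterm2
  calc ‖((b * f) 0)‖ + (1 - r ^ 2) * ‖(deriv (b * f) z)‖
      ≤ Mb * B + (3 * ML * B + Mb * B) := add_le_add hconst hdmain
    _ ≤ 4 * (Mb + ML) * B := by nlinarith
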